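/- arXiv:2504.04088 — 3 statements merged into one kernel-verified Lean document; each statement's English description precedes it below -/
import Mathlib

section
/- Let N, N' ≥ 2 and r, r' ∈ (0,1). If log N / log N' is rational, then the symbolic spaces (Ω_N, ρ_r) and (Ω_{N'}, ρ_{r'}) are strictly Hölder equivalent. -/
open Real

/-- Length of the maximal common prefix of two sequences (meaningful when `x ≠ y`). -/
noncomputable def wedge {N : ℕ} (x y : ℕ → Fin N) : ℕ := sInf {n | x n ≠ y n}

open scoped Classical in
/-- The metric `ρ_r` on the symbolic space `Ω_N = {0,…,N-1}^ℕ`. -/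
noncomputable def rho (N : ℕ) (r : ℝ) (x y : ℕ → Fin N) : ℝ :=
  if x = y then 0 else r ^ wedge x y

open scoped Classical in
/-- The metric `ρ_r` for a vector of ratios `r : Fin N → ℝ`:
`ρ_r(x,y)` is the product of the ratios along the maximal common prefix of `x` and `y`. -/
noncomputable def rhoVec {N : ℕ} (r : Fin N → ℝ) (x y : ℕ → Fin N) : ℝ :=
  if x = y then 0 else ∏ i ∈ Finset.range (wedge x y), r (x i)

/-- Strict Hölder equivalence of two distance functions: there are a bijection `f` and
constants `s, C > 0` with `C⁻¹ d(x,y)^s ≤ d'(f x, f y) ≤ C d(x,y)^s`. -/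
def HolderEquivD {X Y : Type*} (dX : X → X → ℝ) (dY : Y → Y → ℝ) : Prop :=
  ∃ f : X → Y, Function.Bijective f ∧ ∃ s C : ℝ, 0 < s ∧ 0 < C ∧
    ∀ a b, C⁻¹ * dX a b ^ s ≤ dY (f a) (f b) ∧ dY (f a) (f b) ≤ C * dX a b ^ s

/-- Lipschitz equivalence of two distance functions. -/
def LipschitzEquivD {X Y : Type*} (dX : X → X → ℝ) (dY : Y → Y → ℝ) : Prop :=
  ∃ f : X → Y, Function.Bijective f ∧ ∃ C : ℝ, 0 < C ∧
    ∀ a b, C⁻¹ * dX a b ≤ dY (f a) (f b) ∧ dY (f a) (f b) ≤ C * dX a b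

lemma wedge_ne {N : ℕ} {x y : ℕ → Fin N} (h : x ≠ y) :
    x (wedge x y) ≠ y (wedge x y) := by
  have : ∃ n, x n ≠ y n := by
    by_contra hc; push_neg at hc; exact h (funext hc)
  exact Nat.sInf_mem this

lemma wedge_eq_of_lt {N : ℕ} {x y : ℕ → Fin N} {i : ℕ} (h : i < wedge x y) : x i = y i := by
  by_contra hc
  exact absurd (Nat.sInf_le (s := {n | x n ≠ y n}) hc) (not_le.mpr h)

lemma wedge_le {N : ℕ} {x y : ℕ → Fin N} {i : ℕ} (h : x i ≠ y i) : wedge x y ≤ i :=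
  Nat.sInf_le h

lemma le_wedge {N : ℕ} {x y : ℕ → Fin N} {k : ℕ} (hxy : x ≠ y) (h : ∀ i < k, x i = y i) :
    k ≤ wedge x y := by
  by_contra hc
  push_neg at hc
  exact wedge_ne hxy (h _ hc)

/-- Recode a sequence over `Fin N` into a sequence over `Fin N'` by chopping into blocks of
length `b` and mapping each block to a block of length `a` via the equivalence `e`. -/
noncomputable def blockMap {N N' a b : ℕ} (ha : 0 < a)
    (e : (Fin b → Fin N) ≃ (Fin a → Fin N')) (x : ℕ → Fin N) (n : ℕ) : Fin N' :=
  e (fun i => x (b * (n / a) + i)) ⟨n % a, Nat.mod_lt n ha⟩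

lemma blockMap_apply {N N' a b : ℕ} (ha : 0 < a)
    (e : (Fin b → Fin N) ≃ (Fin a → Fin N')) (x : ℕ → Fin N) (k : ℕ) (j : Fin a) :
    blockMap ha e x (a * k + j) = e (fun i => x (b * k + i)) j := by
  have h1 : (a * k + (j : ℕ)) / a = k := by
    rw [Nat.mul_add_div ha, Nat.div_eq_of_lt j.isLt, Nat.add_zero]
  have h2 : (a * k + (j : ℕ)) % a = (j : ℕ) := by
    rw [Nat.mul_add_mod, Nat.mod_eq_of_lt j.isLt]
  show e (fun i => x (b * ((a * k + (j:ℕ)) / a) + i)) ⟨(a * k + (j:ℕ)) % a, _⟩ = _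
  simp only [h1, h2, Fin.eta]

lemma blockMap_leftInverse {N N' a b : ℕ} (ha : 0 < a) (hb : 0 < b)
    (e : (Fin b → Fin N) ≃ (Fin a → Fin N')) (x : ℕ → Fin N) :
    blockMap hb e.symm (blockMap ha e x) = x := by
  funext n
  have hblock : (fun j : Fin a => blockMap ha e x (a * (n / b) + j))
      = e (fun i => x (b * (n / b) + i)) :=
    funext fun j => blockMap_apply ha e x (n / b) j
  calc blockMap hb e.symm (blockMap ha e x) n
      = e.symm (fun j : Fin a => blockMap ha e x (a * (n / b) + j)) ⟨n % b, Nat.mod_lt n hb⟩ := rfl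
    _ = e.symm (e (fun i => x (b * (n / b) + i))) ⟨n % b, Nat.mod_lt n hb⟩ := by rw [hblock]
    _ = x (b * (n / b) + n % b) := by rw [e.symm_apply_apply]
    _ = x n := by rw [Nat.div_add_mod]

lemma blockMap_wedge {N N' a b : ℕ} (ha : 0 < a) (hb : 0 < b)
    (e : (Fin b → Fin N) ≃ (Fin a → Fin N')) {x y : ℕ → Fin N} (hxy : x ≠ y) :
    blockMap ha e x ≠ blockMap ha e y ∧
    a * (wedge x y / b) ≤ wedge (blockMap ha e x) (blockMap ha e y) ∧
    wedge (blockMap ha e x) (blockMap ha e y) < a * (wedge x y / b) + a := by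
  set m := wedge x y with hm
  set k0 := m / b with hk0
  -- blocks below k0 agree
  have claimA : ∀ n < a * k0, blockMap ha e x n = blockMap ha e y n := by
    intro n hn
    have hdiv : n / a < k0 := (Nat.div_lt_iff_lt_mul ha).mpr (by rwa [Nat.mul_comm] at hn)
    have hagree : (fun i : Fin b => x (b * (n / a) + i)) = fun i : Fin b => y (b * (n / a) + i) := by
      funext i
      apply wedge_eq_of_lt
      have h1 : b * (n / a) + (i : ℕ) < b * (n / a + 1) := by
        rw [Nat.mul_succ]
        have := i.isLt; omega
      have h2 : b * (n / a + 1) ≤ b * k0 := Nat.mul_le_mul_left b hdiv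
      have h3 : b * k0 ≤ m := by
        rw [hk0, mul_comm]
        exact Nat.div_mul_le_self m b
      omega
    show e (fun i => x (b * (n / a) + i)) ⟨n % a, _⟩ = e (fun i => y (b * (n / a) + i)) ⟨n % a, _⟩
    rw [hagree]
  -- the k0-th block differs
  have claimB : ∃ j : Fin a, blockMap ha e x (a * k0 + j) ≠ blockMap ha e y (a * k0 + j) := by
    have hblock : (fun i : Fin b => x (b * k0 + i)) ≠ fun i : Fin b => y (b * k0 + i) := by
      intro hEq
      have h := congrFun hEq ⟨m % b, Nat.mod_lt _ hb⟩
      simp only at h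
      rw [show b * k0 + m % b = m from by rw [hk0]; exact Nat.div_add_mod m b] at h
      exact wedge_ne hxy h
    have he : e (fun i => x (b * k0 + i)) ≠ e (fun i => y (b * k0 + i)) :=
      fun h => hblock (e.injective h)
    obtain ⟨j, hj⟩ := Function.ne_iff.mp he
    exact ⟨j, by rw [blockMap_apply, blockMap_apply]; exact hj⟩
  obtain ⟨j, hj⟩ := claimB
  have hne : blockMap ha e x ≠ blockMap ha e y := fun h => hj (congrFun h _)
  refine ⟨hne, le_wedge hne claimA, ?_⟩
  have := wedge_le hj
  have := j.isLt
  omega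

/-- If `log N / log N' ∈ ℚ` then `(Ω_N, ρ_r)` and `(Ω_{N'}, ρ_{r'})` are
strictly Hölder equivalent. -/
theorem holderEquiv_of_rat (N N' : ℕ) (hN : 2 ≤ N) (hN' : 2 ≤ N')
    (r r' : ℝ) (hr0 : 0 < r) (hr1 : r < 1) (hr0' : 0 < r') (hr1' : r' < 1)
    (hrat : ∃ q : ℚ, Real.log N / Real.log N' = q) :
    HolderEquivD (rho N r) (rho N' r') := by
  obtain ⟨qr, hqr⟩ := hrat
  have hN1 : (1:ℝ) < (N:ℝ) := by exact_mod_cast lt_of_lt_of_le one_lt_two hN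
  have hN1' : (1:ℝ) < (N':ℝ) := by exact_mod_cast lt_of_lt_of_le one_lt_two hN'
  have hlogN : 0 < Real.log N := Real.log_pos hN1
  have hlogN' : 0 < Real.log N' := Real.log_pos hN1'
  have hlr : Real.log r < 0 := Real.log_neg hr0 hr1
  have hlr' : Real.log r' < 0 := Real.log_neg hr0' hr1'
  have hqposR : (0:ℝ) < (qr:ℝ) := hqr ▸ div_pos hlogN hlogN'
  have hqpos : 0 < qr := by exact_mod_cast hqposR
  set a := qr.num.toNat with hadef
  set b := qr.den with hbdef
  have hnum : 0 < qr.num := Rat.num_pos.mpr hqpos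
  have ha : 0 < a := by omega
  have hb : 0 < b := qr.pos
  have hacast : ((a:ℕ):ℝ) = (qr.num:ℝ) := by
    have h : (a:ℤ) = qr.num := Int.toNat_of_nonneg hnum.le
    exact_mod_cast h
  have hqcast : (qr:ℝ) = (a:ℝ) / (b:ℝ) := by
    rw [Rat.cast_def, ← hacast, ← hbdef]
  have key : (b:ℝ) * Real.log N = (a:ℝ) * Real.log N' := by
    have h := hqr
    rw [div_eq_iff (ne_of_gt hlogN'), hqcast] at h
    field_simp at h
    linear_combination h
  have hNab : N ^ b = N' ^ a := by
    have h1 : Real.log ((N:ℝ) ^ b) = Real.log ((N':ℝ) ^ a) := by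
      rw [Real.log_pow, Real.log_pow]
      linarith [key]
    have h2 : ((N:ℝ)) ^ b = ((N':ℝ)) ^ a :=
      Real.log_injOn_pos (Set.mem_Ioi.mpr (by positivity)) (Set.mem_Ioi.mpr (by positivity)) h1
    exact_mod_cast h2
  have hcard : Fintype.card (Fin b → Fin N) = Fintype.card (Fin a → Fin N') := by
    simp only [Fintype.card_fun, Fintype.card_fin]
    exact hNab
  have e := Fintype.equivOfCardEq hcard
  have hbR : (0:ℝ) < (b:ℝ) := by exact_mod_cast hb
  have haR : (0:ℝ) < (a:ℝ) := by exact_mod_cast ha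
  set s : ℝ := ((a:ℝ) * Real.log r') / ((b:ℝ) * Real.log r) with hsdef
  have hs : 0 < s := by
    rw [hsdef]
    apply div_pos_of_neg_of_neg <;> nlinarith
  have hCpos : (0:ℝ) < (r' ^ a)⁻¹ := inv_pos.mpr (pow_pos hr0' a)
  refine ⟨blockMap ha e, ?_, s, (r' ^ a)⁻¹, hs, hCpos, ?_⟩
  · exact Function.bijective_iff_has_inverse.mpr
      ⟨blockMap hb e.symm, blockMap_leftInverse ha hb e, fun y => by
        have h := blockMap_leftInverse hb ha e.symm y
        rwa [Equiv.symm_symm] at h⟩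
  · intro x y
    by_cases hxy : x = y
    · subst hxy
      simp [rho, Real.zero_rpow (ne_of_gt hs)]
    · obtain ⟨hne, hm'1, hm'2⟩ := blockMap_wedge ha hb e hxy
      set m := wedge x y with hmdef
      set m' := wedge (blockMap ha e x) (blockMap ha e y) with hm'def
      set k0 := m / b with hk0def
      unfold rho
      rw [if_neg hxy, if_neg hne]
      have hrm : (r ^ m) ^ s = Real.exp ((m:ℝ) * Real.log r * s) := by
        rw [Real.rpow_def_of_pos (pow_pos hr0 m), Real.log_pow]
      have hrm' : (r' : ℝ) ^ m' = Real.exp ((m':ℝ) * Real.log r') := by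
        rw [← Real.log_pow, Real.exp_log (pow_pos hr0' m')]
      have hCinv : ((r' ^ a)⁻¹)⁻¹ = Real.exp ((a:ℝ) * Real.log r') := by
        rw [inv_inv, ← Real.log_pow, Real.exp_log (pow_pos hr0' a)]
      have hC : (r' ^ a)⁻¹ = Real.exp (-((a:ℝ) * Real.log r')) := by
        rw [Real.exp_neg, ← Real.log_pow, Real.exp_log (pow_pos hr0' a)]
      have hlrne : Real.log r ≠ 0 := ne_of_lt hlr
      have hexp : (m:ℝ) * Real.log r * s = ((a:ℝ) * m / b) * Real.log r' := by
        rw [hsdef]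
        field_simp
      have hbk_n : b * k0 ≤ m := by rw [mul_comm]; exact Nat.div_mul_le_self m b
      have hmlt_n : m < b * k0 + b := by
        have h1 : b * k0 + m % b = m := by rw [hk0def]; exact Nat.div_add_mod m b
        have h2 := Nat.mod_lt m hb
        omega
      have hbk : (b:ℝ) * (k0:ℝ) ≤ (m:ℝ) := by exact_mod_cast hbk_n
      have hmlt : (m:ℝ) < (b:ℝ) * (k0:ℝ) + b := by exact_mod_cast hmlt_n
      have hak : (a:ℝ) * (k0:ℝ) ≤ (m':ℝ) := by exact_mod_cast hm'1
      have hm'lt : (m':ℝ) < (a:ℝ) * (k0:ℝ) + a := by exact_mod_cast hm'2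
      have hD1 : (a:ℝ) * (k0:ℝ) ≤ (a:ℝ) * m / b := by
        rw [le_div_iff₀ hbR]
        calc (a:ℝ) * k0 * b = a * (b * k0) := by ring
          _ ≤ a * m := mul_le_mul_of_nonneg_left hbk haR.le
      have hD2 : (a:ℝ) * m / b ≤ (a:ℝ) * (k0:ℝ) + a := by
        rw [div_le_iff₀ hbR]
        calc (a:ℝ) * m ≤ a * ((b:ℝ) * k0 + b) := mul_le_mul_of_nonneg_left hmlt.le haR.le
          _ = ((a:ℝ) * k0 + a) * b := by ring
      have hnlr' : (0:ℝ) ≤ -Real.log r' := by linarith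
      constructor
      · rw [hCinv, hrm, hrm', ← Real.exp_add, hexp]
        apply Real.exp_le_exp.mpr
        have h1 : (0:ℝ) ≤ (a:ℝ) + (a:ℝ) * m / b - m' := by linarith
        linarith [mul_nonneg h1 hnlr']
      · rw [hC, hrm, hrm', ← Real.exp_add, hexp]
        apply Real.exp_le_exp.mpr
        have h1 : (0:ℝ) ≤ (m':ℝ) + a - (a:ℝ) * m / b := by linarith
        linarith [mul_nonneg h1 hnlr']
end

section
/- Let E, F be self-similar sets satisfying the strong separation condition with contraction ratio lists (r_1,...,r_m) and (t_1,...,t_n) respectively, let s = dim_H E / dim_H F, and let E' be a self-similar set with ratio list (r_1^s,...,r_m^s) satisfying the strong separation condition. Then E is strictly Hölder equivalent to F if and only if E' is Lipschitz equivalent to F. (It suffices to prove this at the level of the symbolic spaces (Ω_m, ρ_r), (Ω_n, ρ_t), (Ω_m, ρ_{r^s}).) -/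
open Real

namespace SymbHolder

variable {N : ℕ}

noncomputable def wprod (r : Fin N → ℝ) (x : ℕ → Fin N) (k : ℕ) : ℝ :=
  ∏ i ∈ Finset.range k, r (x i)

lemma wprod_pos {r : Fin N → ℝ} (hr : ∀ i, 0 < r i) (x : ℕ → Fin N) (k : ℕ) :
    0 < wprod r x k := Finset.prod_pos fun i _ => hr _

lemma wprod_zero (r : Fin N → ℝ) (x : ℕ → Fin N) : wprod r x 0 = 1 := by
  simp [wprod]

lemma wprod_anti {r : Fin N → ℝ} (hr : ∀ i, 0 < r i ∧ r i < 1) (x : ℕ → Fin N)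
    {k l : ℕ} (hkl : k ≤ l) : wprod r x l ≤ wprod r x k := by
  unfold wprod
  rw [← Finset.prod_range_mul_prod_Ico _ hkl]
  have h1 : ∏ i ∈ Finset.Ico k l, r (x i) ≤ 1 :=
    Finset.prod_le_one (fun i _ => (hr _).1.le) (fun i _ => (hr _).2.le)
  have h2 : (0:ℝ) < ∏ i ∈ Finset.range k, r (x i) := Finset.prod_pos fun i _ => (hr _).1
  nlinarith

lemma wprod_le_pow {r : Fin N → ℝ} {R : ℝ} (hr : ∀ i, 0 < r i) (hR : ∀ i, r i ≤ R)
    (x : ℕ → Fin N) (k : ℕ) : wprod r x k ≤ R ^ k := by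
  calc wprod r x k ≤ ∏ _i ∈ Finset.range k, R :=
        Finset.prod_le_prod (fun i _ => (hr _).le) (fun i _ => hR _)
    _ = R ^ k := by rw [Finset.prod_const, Finset.card_range]

lemma wprod_congr {r : Fin N → ℝ} {x y : ℕ → Fin N} {k : ℕ}
    (h : ∀ i < k, x i = y i) : wprod r x k = wprod r y k :=
  Finset.prod_congr rfl fun i hi => by rw [h i (Finset.mem_range.mp hi)]

lemma wprod_rpow {r : Fin N → ℝ} (hr : ∀ i, 0 < r i) (x : ℕ → Fin N) (k : ℕ) (d : ℝ) :
    wprod r x k ^ d = wprod (fun i => r i ^ d) x k := by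
  unfold wprod
  rw [← Real.finset_prod_rpow _ _ (fun i _ => (hr _).le)]

lemma wedge_spec {x y : ℕ → Fin N} (h : x ≠ y) :
    x (wedge x y) ≠ y (wedge x y) ∧ ∀ i < wedge x y, x i = y i := by
  have hne : {n | x n ≠ y n}.Nonempty := by
    by_contra hc
    exact h (funext fun n => by_contra fun hn => hc ⟨n, hn⟩)
  refine ⟨Nat.sInf_mem hne, fun i hi => ?_⟩
  by_contra hc
  exact absurd (Nat.sInf_le hc) (not_le.mpr hi)

lemma rhoVec_nonneg {r : Fin N → ℝ} (hr : ∀ i, 0 < r i) (x y : ℕ → Fin N) :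
    0 ≤ rhoVec r x y := by
  unfold rhoVec; split
  · exact le_refl 0
  · exact le_of_lt (Finset.prod_pos fun i _ => hr _)

end SymbHolder

namespace SymbHolder
variable {N : ℕ}

/-- stopping time -/
noncomputable def stopT (r : Fin N → ℝ) (ε : ℝ) (x : ℕ → Fin N) : ℕ :=
  sInf {k | wprod r x k ≤ ε}

section Stop
variable {r : Fin N → ℝ} {ε : ℝ} {K : ℕ}
variable (hr : ∀ i, 0 < r i ∧ r i < 1) (hε : 0 < ε) (hε1 : ε < 1)
variable (hK : ∀ x : ℕ → Fin N, wprod r x K ≤ ε)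

include hK in
lemma stopT_le (x : ℕ → Fin N) : stopT r ε x ≤ K := Nat.sInf_le (hK x)

include hK in
lemma wprod_stopT_le (x : ℕ → Fin N) : wprod r x (stopT r ε x) ≤ ε :=
  Nat.sInf_mem (⟨K, hK x⟩ : {k | wprod r x k ≤ ε}.Nonempty)

lemma lt_stopT_gt {x : ℕ → Fin N} {k : ℕ} (hk : k < stopT r ε x) :
    ε < wprod r x k := by
  by_contra hc
  push_neg at hc
  have h2 : stopT r ε x ≤ k :=
    Nat.sInf_le (show k ∈ {k | wprod r x k ≤ ε} from hc)
  omega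

include hε1 hK in
lemma one_le_stopT (x : ℕ → Fin N) : 1 ≤ stopT r ε x := by
  by_contra h
  push_neg at h
  have h0 : stopT r ε x = 0 := by omega
  have h1 := wprod_stopT_le hK x
  rw [h0, wprod_zero] at h1
  linarith

include hK in
/-- the stopping time only depends on coordinates before it -/
lemma stopT_congr {x y : ℕ → Fin N} (h : ∀ i < stopT r ε x, x i = y i) :
    stopT r ε y = stopT r ε x := by
  have h1 : wprod r y (stopT r ε x) ≤ ε := by
    rw [← wprod_congr h]; exact wprod_stopT_le hK x
  have h2 : stopT r ε y ≤ stopT r ε x := Nat.sInf_le h1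
  rcases lt_or_eq_of_le h2 with h3 | h3
  · exfalso
    have h4 : ε < wprod r x (stopT r ε y) := lt_stopT_gt h3
    have h5 : wprod r x (stopT r ε y) = wprod r y (stopT r ε y) :=
      wprod_congr (fun i hi => h i (lt_trans hi h3))
    have h6 : wprod r y (stopT r ε y) ≤ ε := wprod_stopT_le hK y
    linarith
  · exact h3

end Stop

/-- padding a finite word to an infinite one -/
noncomputable def padF (N K : ℕ) [NeZero N] (u : Fin K → Fin N) : ℕ → Fin N :=
  fun i => if h : i < K then u ⟨i, h⟩ else default

lemma padF_injective (N K : ℕ) [NeZero N] : Function.Injective (padF N K) := by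
  intro u v h
  funext i
  have := congrFun h (i : ℕ)
  simpa [padF, i.isLt] using this

/-- truncation at the stopping time -/
noncomputable def trunc [NeZero N] (r : Fin N → ℝ) (ε : ℝ) (K : ℕ)
    (u : Fin K → Fin N) : Fin K → Fin N :=
  fun i => if (i : ℕ) < stopT r ε (padF N K u) then u i else default

end SymbHolder

namespace SymbHolder
variable {N : ℕ} [NeZero N]

section Fiber
variable {r : Fin N → ℝ} {ε : ℝ} {K : ℕ}
variable (hr : ∀ i, 0 < r i ∧ r i < 1) (hε : 0 < ε) (hε1 : ε < 1)
variable (hK : ∀ x : ℕ → Fin N, wprod r x K ≤ ε)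

lemma padF_lt (u : Fin K → Fin N) (i : ℕ) (h : i < K) : padF N K u i = u ⟨i, h⟩ := by
  simp [padF, h]

include hK in
lemma stopT_padF_le (u : Fin K → Fin N) : stopT r ε (padF N K u) ≤ K :=
  stopT_le hK _

lemma trunc_eq_of_lt (u : Fin K → Fin N) (i : Fin K)
    (h : (i : ℕ) < stopT r ε (padF N K u)) : trunc r ε K u i = u i := by
  simp [trunc, h]

include hK in
lemma stopT_trunc (u : Fin K → Fin N) :
    stopT r ε (padF N K (trunc r ε K u)) = stopT r ε (padF N K u) := by
  apply stopT_congr hK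
  intro i hi
  have hiK : i < K := lt_of_lt_of_le hi (stopT_padF_le hK u)
  rw [padF_lt u i hiK, padF_lt (trunc r ε K u) i hiK, trunc_eq_of_lt]
  exact hi

include hK in
lemma image_trunc_default {w : Fin K → Fin N}
    (hw : w ∈ Finset.image (trunc r ε K) Finset.univ) (i : Fin K)
    (h : stopT r ε (padF N K w) ≤ (i : ℕ)) : w i = default := by
  obtain ⟨v, -, rfl⟩ := Finset.mem_image.mp hw
  rw [stopT_trunc hK] at h
  simp [trunc, not_lt.mpr h]

include hK in
lemma trunc_eq_iff {w : Fin K → Fin N}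
    (hw : w ∈ Finset.image (trunc r ε K) Finset.univ) (u : Fin K → Fin N) :
    trunc r ε K u = w ↔ ∀ i : Fin K, (i : ℕ) < stopT r ε (padF N K w) → u i = w i := by
  constructor
  · intro h i hi
    -- first: stopT of w equals stopT of u
    have hs : stopT r ε (padF N K w) = stopT r ε (padF N K u) := by
      rw [← h, stopT_trunc hK]
    rw [hs] at hi
    rw [← h, trunc_eq_of_lt u i hi]
  · intro h
    have hs : stopT r ε (padF N K u) = stopT r ε (padF N K w) := by
      apply stopT_congr hK
      intro i hi
      have hiK : i < K := lt_of_lt_of_le hi (stopT_padF_le hK w)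
      rw [padF_lt w i hiK, padF_lt u i hiK, h ⟨i, hiK⟩ hi]
    funext i
    by_cases hik : (i : ℕ) < stopT r ε (padF N K w)
    · rw [trunc_eq_of_lt u i (hs ▸ hik), h i hik]
    · rw [show trunc r ε K u i = default by simp [trunc, hs, hik]]
      exact (image_trunc_default hK hw i (not_lt.mp hik)).symm

include hK in
lemma fiber_eq_piFinset {w : Fin K → Fin N}
    (hw : w ∈ Finset.image (trunc r ε K) Finset.univ) :
    Finset.univ.filter (fun u => trunc r ε K u = w) =
      Fintype.piFinset (fun i : Fin K =>
        if (i : ℕ) < stopT r ε (padF N K w) then {w i} else Finset.univ) := by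
  ext u
  simp only [Finset.mem_filter, Finset.mem_univ, true_and, Fintype.mem_piFinset]
  rw [trunc_eq_iff hK hw]
  constructor
  · intro h i
    by_cases hik : (i : ℕ) < stopT r ε (padF N K w)
    · simp [hik, h i hik]
    · simp [hik]
  · intro h i hik
    have := h i
    simp [hik] at this
    exact this

end Fiber
end SymbHolder

namespace SymbHolder
variable {N : ℕ} [NeZero N]

section Count
variable {r : Fin N → ℝ} {ε : ℝ} {K : ℕ} {d : ℝ}
variable (hr : ∀ i, 0 < r i ∧ r i < 1) (hε : 0 < ε) (hε1 : ε < 1)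
variable (hK : ∀ x : ℕ → Fin N, wprod r x K ≤ ε)
variable (hd : 0 < d) (hsum : ∑ j, r j ^ d = 1)

include hr hK hsum in
lemma fiber_sum {w : Fin K → Fin N}
    (hw : w ∈ Finset.image (trunc r ε K) Finset.univ) :
    ∑ u ∈ Finset.univ.filter (fun u => trunc r ε K u = w),
      ∏ i : Fin K, r (u i) ^ d
      = wprod r (padF N K w) (stopT r ε (padF N K w)) ^ d := by
  have hkK : stopT r ε (padF N K w) ≤ K := stopT_padF_le hK w
  set k := stopT r ε (padF N K w) with hk
  rw [fiber_eq_piFinset hK hw]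
  have hps := Finset.prod_univ_sum (fun i : Fin K =>
    if (i : ℕ) < stopT r ε (padF N K w) then ({w i} : Finset (Fin N)) else Finset.univ)
    (fun _ j => r j ^ d)
  rw [← hps]
  have hstep : ∀ i : Fin K,
      (∑ j ∈ (if (i : ℕ) < k then ({w i} : Finset (Fin N)) else Finset.univ), r j ^ d)
      = (fun i : ℕ => if i < k then r (padF N K w i) ^ d else 1) (i : ℕ) := by
    intro i
    by_cases hik : (i : ℕ) < k
    · simp [hik, padF_lt w i i.isLt]
    · simp [hik, hsum]
  rw [Finset.prod_congr rfl (fun i _ => hstep i)]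
  rw [Fin.prod_univ_eq_prod_range (fun i : ℕ => if i < k then r (padF N K w i) ^ d else 1) K]
  rw [← Finset.prod_range_mul_prod_Ico _ hkK]
  have h2 : ∏ i ∈ Finset.Ico k K,
      (if i < k then r (padF N K w i) ^ d else 1) = 1 := by
    apply Finset.prod_eq_one
    intro i hi
    rw [if_neg (not_lt.mpr (Finset.mem_Ico.mp hi).1)]
  have h3 : ∏ i ∈ Finset.range k,
      (if i < k then r (padF N K w i) ^ d else 1)
      = ∏ i ∈ Finset.range k, r (padF N K w i) ^ d := by
    apply Finset.prod_congr rfl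
    intro i hi
    rw [if_pos (Finset.mem_range.mp hi)]
  rw [h2, h3, mul_one]
  rw [wprod_rpow (fun i => (hr i).1)]
  rfl

include hsum in
lemma total_sum :
    ∑ u : Fin K → Fin N, ∏ i : Fin K, r (u i) ^ d = 1 := by
  have h := Finset.prod_univ_sum (fun _ : Fin K => (Finset.univ : Finset (Fin N)))
    (fun _ j => r j ^ d)
  rw [Fintype.piFinset_univ] at h
  rw [← h, Finset.prod_congr rfl (fun i _ => hsum), Finset.prod_const, one_pow]

include hr hε hε1 hK hd hsum in
/-- lower bound on the number of stopping words -/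
lemma card_image_trunc_lower :
    ε ^ (-d) ≤ ((Finset.image (trunc r ε K) Finset.univ).card : ℝ) := by
  have h1 : (1 : ℝ) = ∑ w ∈ Finset.image (trunc r ε K) Finset.univ,
      ∑ u ∈ Finset.univ.filter (fun u => trunc r ε K u = w),
        ∏ i : Fin K, r (u i) ^ d := by
    rw [Finset.sum_fiberwise_of_maps_to (fun u _ => Finset.mem_image_of_mem _ (Finset.mem_univ u))]
    exact (total_sum hsum).symm
  have h2 : ∀ w ∈ Finset.image (trunc r ε K) Finset.univ,
      ∑ u ∈ Finset.univ.filter (fun u => trunc r ε K u = w),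
        ∏ i : Fin K, r (u i) ^ d ≤ ε ^ d := by
    intro w hw
    rw [fiber_sum hr hK hsum hw]
    apply Real.rpow_le_rpow (le_of_lt (wprod_pos (fun i => (hr i).1) _ _)) _ hd.le
    exact wprod_stopT_le hK _
  have h3 : (1:ℝ) ≤ ((Finset.image (trunc r ε K) Finset.univ).card : ℝ) * ε ^ d := by
    calc (1:ℝ) = _ := h1
      _ ≤ ∑ _w ∈ Finset.image (trunc r ε K) Finset.univ, ε ^ d := Finset.sum_le_sum h2
      _ = ((Finset.image (trunc r ε K) Finset.univ).card : ℝ) * ε ^ d := by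
          rw [Finset.sum_const, nsmul_eq_mul]
  have hεd : (0:ℝ) < ε ^ d := Real.rpow_pos_of_pos hε d
  rw [Real.rpow_neg hε.le]
  calc (ε ^ d)⁻¹ = 1 * (ε ^ d)⁻¹ := (one_mul _).symm
    _ ≤ (((Finset.image (trunc r ε K) Finset.univ).card : ℝ) * ε ^ d) * (ε ^ d)⁻¹ :=
        mul_le_mul_of_nonneg_right h3 (inv_nonneg.mpr hεd.le)
    _ = ((Finset.image (trunc r ε K) Finset.univ).card : ℝ) := by
        rw [mul_assoc, mul_inv_cancel₀ hεd.ne', mul_one]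

include hr hε hε1 hK hd hsum in
/-- upper bound on the number of stopping words, in terms of a lower bound `lo` on `r` -/
lemma card_image_trunc_upper {lo : ℝ} (hlo : 0 < lo) (hlo' : ∀ i, lo ≤ r i) :
    ((Finset.image (trunc r ε K) Finset.univ).card : ℝ) ≤ (lo * ε) ^ (-d) := by
  have h2 : ∀ w ∈ Finset.image (trunc r ε K) Finset.univ,
      (lo * ε) ^ d ≤ ∑ u ∈ Finset.univ.filter (fun u => trunc r ε K u = w),
        ∏ i : Fin K, r (u i) ^ d := by
    intro w hw
    rw [fiber_sum hr hK hsum hw]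
    apply Real.rpow_le_rpow (by positivity) _ hd.le
    have hk1 : 1 ≤ stopT r ε (padF N K w) := one_le_stopT hε1 hK _
    have hgt : ε < wprod r (padF N K w) (stopT r ε (padF N K w) - 1) :=
      lt_stopT_gt (Nat.sub_lt (by omega) one_pos)
    have hks : wprod r (padF N K w) (stopT r ε (padF N K w))
        = wprod r (padF N K w) (stopT r ε (padF N K w) - 1)
          * r (padF N K w (stopT r ε (padF N K w) - 1)) := by
      conv_lhs => rw [show stopT r ε (padF N K w)
        = (stopT r ε (padF N K w) - 1) + 1 by omega]
      rw [wprod, Finset.prod_range_succ]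
      rfl
    calc lo * ε
        ≤ r (padF N K w (stopT r ε (padF N K w) - 1))
          * wprod r (padF N K w) (stopT r ε (padF N K w) - 1) :=
          mul_le_mul (hlo' _) hgt.le hε.le (hr _).1.le
      _ = wprod r (padF N K w) (stopT r ε (padF N K w)) := by rw [hks]; ring
  have h1 : (1 : ℝ) = ∑ w ∈ Finset.image (trunc r ε K) Finset.univ,
      ∑ u ∈ Finset.univ.filter (fun u => trunc r ε K u = w),
        ∏ i : Fin K, r (u i) ^ d := by
    rw [Finset.sum_fiberwise_of_maps_to (fun u _ => Finset.mem_image_of_mem _ (Finset.mem_univ u))]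
    exact (total_sum hsum).symm
  have h3 : ((Finset.image (trunc r ε K) Finset.univ).card : ℝ) * (lo * ε) ^ d ≤ 1 := by
    calc ((Finset.image (trunc r ε K) Finset.univ).card : ℝ) * (lo * ε) ^ d
        = ∑ _w ∈ Finset.image (trunc r ε K) Finset.univ, (lo * ε) ^ d := by
          rw [Finset.sum_const, nsmul_eq_mul]
      _ ≤ _ := Finset.sum_le_sum h2
      _ = 1 := h1.symm
  have hp : (0:ℝ) < (lo * ε) ^ d := Real.rpow_pos_of_pos (by positivity) d
  rw [Real.rpow_neg (by positivity)]
  calc ((Finset.image (trunc r ε K) Finset.univ).card : ℝ)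
      = (((Finset.image (trunc r ε K) Finset.univ).card : ℝ) * (lo * ε) ^ d) * ((lo * ε) ^ d)⁻¹ := by
        rw [mul_assoc, mul_inv_cancel₀ hp.ne', mul_one]
    _ ≤ 1 * ((lo * ε) ^ d)⁻¹ := mul_le_mul_of_nonneg_right h3 (inv_nonneg.mpr hp.le)
    _ = ((lo * ε) ^ d)⁻¹ := one_mul _

end Count
end SymbHolder

namespace SymbHolder
variable {N : ℕ} [NeZero N]

lemma rhoVec_eq {r : Fin N → ℝ} {x y : ℕ → Fin N} (h : x ≠ y) :
    rhoVec r x y = wprod r x (wedge x y) := by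
  rw [rhoVec, if_neg h]; rfl

lemma exists_K {r : Fin N → ℝ} {ε : ℝ}
    (hr : ∀ i, 0 < r i ∧ r i < 1) (hε : 0 < ε) :
    ∃ K, ∀ x : ℕ → Fin N, wprod r x K ≤ ε := by
  have hne : (Finset.univ : Finset (Fin N)).Nonempty := Finset.univ_nonempty
  set R := Finset.univ.sup' hne r with hR
  have hR1 : ∀ i, r i ≤ R := fun i => Finset.le_sup' r (Finset.mem_univ i)
  have hRlt : R < 1 := (Finset.sup'_lt_iff hne).mpr (fun i _ => (hr i).2)
  obtain ⟨K, hKlt⟩ := exists_pow_lt_of_lt_one hε hRlt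
  exact ⟨K, fun x => (wprod_le_pow (fun i => (hr i).1) hR1 x K).trans hKlt.le⟩

lemma padF_default {r : Fin N → ℝ} {ε : ℝ} {K : ℕ}
    (hK : ∀ x : ℕ → Fin N, wprod r x K ≤ ε)
    {w : Fin K → Fin N} (hw : w ∈ Finset.image (trunc r ε K) Finset.univ)
    {i : ℕ} (hi : stopT r ε (padF N K w) ≤ i) : padF N K w i = default := by
  by_cases hiK : i < K
  · rw [padF_lt w i hiK]
    exact image_trunc_default hK hw ⟨i, hiK⟩ hi
  · simp [padF, hiK]

/-- Existence of a large `ε`-separated set. -/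
theorem exists_sep_set {r : Fin N → ℝ} {ε d : ℝ}
    (hr : ∀ i, 0 < r i ∧ r i < 1) (hε : 0 < ε) (hε1 : ε < 1)
    (hd : 0 < d) (hsum : ∑ j, r j ^ d = 1) :
    ∃ A : Finset (ℕ → Fin N), ε ^ (-d) ≤ (A.card : ℝ) ∧
      ∀ x ∈ A, ∀ y ∈ A, x ≠ y → ε < rhoVec r x y := by
  obtain ⟨K, hK⟩ := exists_K hr hε
  classical
  refine ⟨(Finset.image (trunc r ε K) Finset.univ).image (padF N K), ?_, ?_⟩
  · rw [Finset.card_image_of_injective _ (padF_injective N K)]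
    exact card_image_trunc_lower hr hε hε1 hK hd hsum
  · intro x hx y hy hxy
    obtain ⟨w, hw, rfl⟩ := Finset.mem_image.mp hx
    obtain ⟨w', hw', rfl⟩ := Finset.mem_image.mp hy
    rw [rhoVec_eq hxy]
    obtain ⟨hj1, hj2⟩ := wedge_spec hxy
    set j := wedge (padF N K w) (padF N K w') with hjdef
    by_cases hx1 : j < stopT r ε (padF N K w)
    · exact lt_stopT_gt hx1
    · by_cases hy1 : j < stopT r ε (padF N K w')
      · have := lt_stopT_gt hy1
        rwa [wprod_congr hj2]
      · exfalso
        apply hj1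
        rw [padF_default hK hw (not_lt.mp hx1), padF_default hK hw' (not_lt.mp hy1)]

/-- Upper bound on the size of any `ε`-separated set. -/
theorem card_le_of_sep {r : Fin N → ℝ} {ε d lo : ℝ}
    (hr : ∀ i, 0 < r i ∧ r i < 1) (hε : 0 < ε) (hε1 : ε < 1)
    (hd : 0 < d) (hsum : ∑ j, r j ^ d = 1)
    (hlo : 0 < lo) (hlo' : ∀ i, lo ≤ r i)
    (A : Finset (ℕ → Fin N))
    (hA : ∀ x ∈ A, ∀ y ∈ A, x ≠ y → ε < rhoVec r x y) :
    (A.card : ℝ) ≤ (lo * ε) ^ (-d) := by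
  obtain ⟨K, hK⟩ := exists_K hr hε
  classical
  set θ : (ℕ → Fin N) → (Fin K → Fin N) :=
    fun x => trunc r ε K (fun i : Fin K => x i) with hθ
  have hpad : ∀ (x : ℕ → Fin N) (i : ℕ) (h : i < K),
      padF N K (fun i : Fin K => x i) i = x i := by
    intro x i h
    rw [padF_lt _ i h]
  have hstop : ∀ x : ℕ → Fin N,
      stopT r ε (padF N K (fun i : Fin K => x i)) = stopT r ε x := by
    intro x
    apply stopT_congr hK
    intro i hi
    exact (hpad x i (lt_of_lt_of_le hi (stopT_le hK x))).symm
  have hinj : Set.InjOn θ A := by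
    intro x hx y hy hxy
    by_contra hne
    set u := fun i : Fin K => x i with hu
    set v := fun i : Fin K => y i with hv
    -- stopT of x and y agree
    have e1 : stopT r ε (padF N K u) = stopT r ε (padF N K v) := by
      rw [← stopT_trunc hK u, ← stopT_trunc hK v, hθ] at *
      rw [show trunc r ε K u = trunc r ε K v from hxy]
    have e2 : stopT r ε x = stopT r ε y := by
      rw [← hstop x, ← hstop y]; exact e1
    -- x and y agree below the common stopping time
    have e3 : ∀ i < stopT r ε x, x i = y i := by
      intro i hi
      have hiK : i < K := lt_of_lt_of_le hi (stopT_le hK x)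
      have hi' : (⟨i, hiK⟩ : Fin K) < stopT r ε (padF N K (trunc r ε K v)) := by
        rw [stopT_trunc hK v, ← e1, hstop x]
        exact hi
      have h4 : trunc r ε K u = trunc r ε K v := hxy
      have h5 := (trunc_eq_iff hK
        (Finset.mem_image_of_mem _ (Finset.mem_univ v)) u).mp h4 ⟨i, hiK⟩ hi'
      have h6 : trunc r ε K v ⟨i, hiK⟩ = v ⟨i, hiK⟩ := by
        apply trunc_eq_of_lt
        rw [hstop y, ← e2]
        exact hi
      calc x i = u ⟨i, hiK⟩ := rfl
        _ = trunc r ε K v ⟨i, hiK⟩ := h5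
        _ = v ⟨i, hiK⟩ := h6
        _ = y i := rfl
    -- hence the wedge is at least the stopping time, so the distance is ≤ ε
    obtain ⟨hj1, hj2⟩ := wedge_spec hne
    have hjk : stopT r ε x ≤ wedge x y := by
      by_contra hc
      exact hj1 (e3 _ (not_le.mp hc))
    have : rhoVec r x y ≤ ε := by
      rw [rhoVec_eq hne]
      calc wprod r x (wedge x y) ≤ wprod r x (stopT r ε x) := wprod_anti hr x hjk
        _ ≤ ε := wprod_stopT_le hK x
    exact absurd (hA x hx y hy hne) (not_lt.mpr this)
  have hcard : A.card = (A.image θ).card := (Finset.card_image_of_injOn hinj).symm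
  have hsub : A.image θ ⊆ Finset.image (trunc r ε K) Finset.univ := by
    intro w hw
    obtain ⟨x, hx, rfl⟩ := Finset.mem_image.mp hw
    exact Finset.mem_image_of_mem _ (Finset.mem_univ _)
  calc (A.card : ℝ) = ((A.image θ).card : ℝ) := by rw [hcard]
    _ ≤ ((Finset.image (trunc r ε K) Finset.univ).card : ℝ) := by
        exact_mod_cast Finset.card_le_card hsub
    _ ≤ (lo * ε) ^ (-d) := card_image_trunc_upper hr hε hε1 hK hd hsum hlo hlo'

end SymbHolder

namespace SymbHolder

/-- the key dimension-comparison lemma -/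
theorem dim_le_of_holder {M N : ℕ} [NeZero M] [NeZero N]
    {r : Fin M → ℝ} {t : Fin N → ℝ} {dE dF s' C : ℝ}
    (hr : ∀ i, 0 < r i ∧ r i < 1) (ht : ∀ j, 0 < t j ∧ t j < 1)
    (hdE : 0 < dE) (hdF : 0 < dF)
    (hE : ∑ i, r i ^ dE = 1) (hF : ∑ j, t j ^ dF = 1)
    (hs' : 0 < s') (hC : 0 < C)
    (f : (ℕ → Fin M) → (ℕ → Fin N)) (hf : Function.Injective f)
    (hlow : ∀ a b, C⁻¹ * rhoVec r a b ^ s' ≤ rhoVec t (f a) (f b)) :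
    dE ≤ s' * dF := by
  classical
  -- lower bound on t
  have htne : (Finset.univ : Finset (Fin N)).Nonempty := Finset.univ_nonempty
  set lo := Finset.univ.inf' htne t with hlodef
  have hlo : 0 < lo := (Finset.lt_inf'_iff htne).mpr (fun j _ => (ht j).1)
  have hlo' : ∀ j, lo ≤ t j := fun j => Finset.inf'_le t (Finset.mem_univ j)
  -- the main inequality for suitable ε
  have key : ∀ ε : ℝ, 0 < ε → ε < 1 → ε < C ^ (1/s') →
      ε ^ (-dE) ≤ (lo * (C⁻¹ * ε ^ s')) ^ (-dF) := by
    intro ε hε hε1 hεC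
    set δ := C⁻¹ * ε ^ s' with hδdef
    have hδ : 0 < δ := by positivity
    have hδ1 : δ < 1 := by
      have h1 : ε ^ s' < (C ^ (1/s')) ^ s' := Real.rpow_lt_rpow hε.le hεC hs'
      have h2 : (C ^ (1/s')) ^ s' = C := by
        rw [← Real.rpow_mul hC.le, one_div, inv_mul_cancel₀ hs'.ne', Real.rpow_one]
      rw [hδdef]
      rw [h2] at h1
      calc C⁻¹ * ε ^ s' < C⁻¹ * C := by
            exact mul_lt_mul_of_pos_left h1 (inv_pos.mpr hC)
        _ = 1 := inv_mul_cancel₀ hC.ne'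
    obtain ⟨A, hAcard, hAsep⟩ := exists_sep_set hr hε hε1 hdE hE
    have hBsep : ∀ b1 ∈ A.image f, ∀ b2 ∈ A.image f, b1 ≠ b2 →
        δ < rhoVec t b1 b2 := by
      intro b1 hb1 b2 hb2 hne
      obtain ⟨x, hx, rfl⟩ := Finset.mem_image.mp hb1
      obtain ⟨y, hy, rfl⟩ := Finset.mem_image.mp hb2
      have hxy : x ≠ y := fun h => hne (by rw [h])
      have h1 : ε < rhoVec r x y := hAsep x hx y hy hxy
      have h2 : ε ^ s' < rhoVec r x y ^ s' := Real.rpow_lt_rpow hε.le h1 hs'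
      calc δ = C⁻¹ * ε ^ s' := hδdef
        _ < C⁻¹ * rhoVec r x y ^ s' := mul_lt_mul_of_pos_left h2 (inv_pos.mpr hC)
        _ ≤ rhoVec t (f x) (f y) := hlow x y
    have hup : ((A.image f).card : ℝ) ≤ (lo * δ) ^ (-dF) :=
      card_le_of_sep ht hδ hδ1 hdF hF hlo hlo' _ hBsep
    have hcard : (A.image f).card = A.card := Finset.card_image_of_injective _ hf
    calc ε ^ (-dE) ≤ (A.card : ℝ) := hAcard
      _ = ((A.image f).card : ℝ) := by rw [hcard]
      _ ≤ (lo * δ) ^ (-dF) := hup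
  -- now deduce the exponent inequality
  by_contra hcon
  push_neg at hcon
  set e := dE - s' * dF with hedef
  have he : 0 < e := by rw [hedef]; linarith
  set K₀ := (lo * C⁻¹) ^ (-dF) with hK₀def
  have hK₀ : 0 < K₀ := Real.rpow_pos_of_pos (by positivity) _
  set K₁ := max K₀ 1 with hK₁def
  have hK₁ : 0 < K₁ := lt_of_lt_of_le one_pos (le_max_right _ _)
  -- the bound ε^(-e) ≤ K₀ for all small ε
  have bound : ∀ ε : ℝ, 0 < ε → ε < 1 → ε < C ^ (1/s') → ε ^ (-e) ≤ K₀ := by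
    intro ε hε hε1 hεC
    have h1 := key ε hε hε1 hεC
    have h2 : (lo * (C⁻¹ * ε ^ s')) ^ (-dF) = K₀ * ε ^ (-(s' * dF)) := by
      rw [show lo * (C⁻¹ * ε ^ s') = (lo * C⁻¹) * ε ^ s' by ring]
      rw [Real.mul_rpow (by positivity) (by positivity), ← Real.rpow_mul hε.le]
      rw [hK₀def]
      congr 1
      ring
    have h3 : ε ^ (-dE) = ε ^ (-(s' * dF)) * ε ^ (-e) := by
      rw [← Real.rpow_add hε]
      congr 1
      rw [hedef]
      ring
    rw [h2, h3] at h1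
    have hpow : (0:ℝ) < ε ^ (-(s' * dF)) := Real.rpow_pos_of_pos hε _
    rw [mul_comm (ε ^ (-(s' * dF)))] at h1
    exact (mul_le_mul_iff_of_pos_right hpow).mp h1
  -- choose ε small enough to contradict the bound
  have hCp : (0:ℝ) < C ^ (1/s') := Real.rpow_pos_of_pos hC _
  have hKp : (0:ℝ) < K₁ ^ (-(1/e)) := Real.rpow_pos_of_pos hK₁ _
  set m := min (min 1 (C ^ (1/s'))) (K₁ ^ (-(1/e))) with hmdef
  have hm : 0 < m := lt_min (lt_min one_pos hCp) hKp
  set ε₀ := m / 2 with hε₀def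
  have hε₀ : 0 < ε₀ := by positivity
  have hε₀m : ε₀ < m := by rw [hε₀def]; linarith
  have h1 : ε₀ < 1 := lt_of_lt_of_le hε₀m ((min_le_left _ _).trans (min_le_left _ _))
  have h2 : ε₀ < C ^ (1/s') :=
    lt_of_lt_of_le hε₀m ((min_le_left _ _).trans (min_le_right _ _))
  have h3 : ε₀ < K₁ ^ (-(1/e)) := lt_of_lt_of_le hε₀m (min_le_right _ _)
  have h4 : ε₀ ^ (-e) ≤ K₀ := bound ε₀ hε₀ h1 h2
  have h5 : (K₁ ^ (-(1/e))) ^ (-e) < ε₀ ^ (-e) :=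
    Real.rpow_lt_rpow_of_neg hε₀ h3 (by linarith)
  have h6 : (K₁ ^ (-(1/e))) ^ (-e) = K₁ := by
    rw [← Real.rpow_mul hK₁.le]
    rw [show -(1/e) * -e = 1 by field_simp]
    exact Real.rpow_one _
  have h7 : K₀ ≤ K₁ := le_max_left _ _
  rw [h6] at h5
  linarith

end SymbHolder


namespace SymbHolder

lemma rhoVec_rpow {N : ℕ} [NeZero N] {r : Fin N → ℝ} (hr : ∀ i, 0 < r i) {s : ℝ} (hs : s ≠ 0)
    (x y : ℕ → Fin N) :
    rhoVec (fun i => r i ^ s) x y = rhoVec r x y ^ s := by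
  by_cases h : x = y
  · rw [rhoVec, rhoVec, if_pos h, if_pos h, Real.zero_rpow hs]
  · rw [rhoVec_eq h, rhoVec_eq h]
    exact (wprod_rpow hr x _ s).symm

end SymbHolder

open SymbHolder in
/-- (Symbolic version.) Let `r`, `t` be ratio lists with similarity
dimensions `dE`, `dF` (i.e. `∑ r_i^{dE} = 1`, `∑ t_j^{dF} = 1`, these being the Hausdorff
dimensions of the corresponding self-similar sets with strong separation), and let
`s = dE/dF`. Then `(Ω_m, ρ_r)` is strictly Hölder equivalent to `(Ω_n, ρ_t)` if and only if
`(Ω_m, ρ_{r^s})` is Lipschitz equivalent to `(Ω_n, ρ_t)`. -/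
theorem holderEquiv_iff_lipschitzEquiv_pow (m n : ℕ) (hm : 2 ≤ m) (hn : 2 ≤ n)
    (r : Fin m → ℝ) (t : Fin n → ℝ)
    (hr : ∀ i, 0 < r i ∧ r i < 1) (ht : ∀ j, 0 < t j ∧ t j < 1)
    (dE dF : ℝ) (hdE : 0 < dE) (hdF : 0 < dF)
    (hE : ∑ i, r i ^ dE = 1) (hF : ∑ j, t j ^ dF = 1) :
    HolderEquivD (rhoVec r) (rhoVec t) ↔
      LipschitzEquivD (rhoVec fun i => r i ^ (dE / dF)) (rhoVec t) := by
  haveI : NeZero m := ⟨by omega⟩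
  haveI : NeZero n := ⟨by omega⟩
  have hs : (0:ℝ) < dE / dF := div_pos hdE hdF
  have hsne : dE / dF ≠ 0 := hs.ne'
  constructor
  · rintro ⟨f, hbij, s', C, hs', hC, hbd⟩
    -- first: s' = dE / dF
    have hle1 : dE ≤ s' * dF := by
      apply dim_le_of_holder hr ht hdE hdF hE hF hs' hC f hbij.injective
      exact fun a b => (hbd a b).1
    have hle2 : s' * dF ≤ dE := by
      set e := Equiv.ofBijective f hbij with hedef
      have hCp : (0:ℝ) < C ^ (1/s') := Real.rpow_pos_of_pos hC _
      have hlow : ∀ a b, (C ^ (1/s'))⁻¹ * rhoVec t a b ^ (1/s')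
          ≤ rhoVec r (e.symm a) (e.symm b) := by
        intro a b
        have hfa : f (e.symm a) = a := e.apply_symm_apply a
        have hfb : f (e.symm b) = b := e.apply_symm_apply b
        have h1 : rhoVec t a b ≤ C * rhoVec r (e.symm a) (e.symm b) ^ s' := by
          have := (hbd (e.symm a) (e.symm b)).2
          rwa [hfa, hfb] at this
        have hρ : 0 ≤ rhoVec r (e.symm a) (e.symm b) :=
          rhoVec_nonneg (fun i => (hr i).1) _ _
        have htρ : 0 ≤ rhoVec t a b := rhoVec_nonneg (fun j => (ht j).1) _ _
        have h2 : rhoVec t a b ^ (1/s')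
            ≤ (C * rhoVec r (e.symm a) (e.symm b) ^ s') ^ (1/s') :=
          Real.rpow_le_rpow htρ h1 (by positivity)
        have h3 : (C * rhoVec r (e.symm a) (e.symm b) ^ s') ^ (1/s')
            = C ^ (1/s') * rhoVec r (e.symm a) (e.symm b) := by
          rw [Real.mul_rpow hC.le (Real.rpow_nonneg hρ _), ← Real.rpow_mul hρ]
          rw [show s' * (1/s') = 1 by field_simp, Real.rpow_one]
        rw [h3] at h2
        rw [inv_mul_le_iff₀ hCp]
        exact h2
      have := dim_le_of_holder ht hr hdF hdE hF hE
        (by positivity : (0:ℝ) < 1/s') hCp e.symm e.symm.injective hlow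
      -- this : dF ≤ (1/s') * dE
      have h4 : s' * dF ≤ s' * ((1/s') * dE) := by
        exact mul_le_mul_of_nonneg_left this hs'.le
      calc s' * dF ≤ s' * ((1/s') * dE) := h4
        _ = dE := by field_simp
    have hseq : s' = dE / dF := by
      have : s' * dF = dE := le_antisymm hle2 hle1
      field_simp [hdF.ne'] at this ⊢
      linarith
    exact ⟨f, hbij, C, hC, fun a b => by
      rw [rhoVec_rpow (fun i => (hr i).1) hsne a b, ← hseq]
      exact hbd a b⟩
  · rintro ⟨f, hbij, C, hC, hbd⟩
    refine ⟨f, hbij, dE/dF, C, hs, hC, fun a b => ?_⟩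
    rw [← rhoVec_rpow (fun i => (hr i).1) hsne a b]
    exact hbd a b
end

section
/- Let E ∈ 𝒮(r_1, r_2) and F ∈ 𝒮(t_1, t_2) with r_1 ≥ r_2 and t_1 ≥ t_2, and suppose log r_1 / log r_2 ∉ ℚ. Assume Rao–Ruan–Wang's theorem: two such self-similar sets with irrational ratio exponent are Lipschitz equivalent iff their ratio lists coincide. Then E and F are strictly Hölder equivalent if and only if log r_1 / log t_1 = log r_2 / log t_2. -/
open Real

lemma rhoVec_rpow {r₁ r₂ : ℝ} (h1 : 0 < r₁) (h2 : 0 < r₂) {s : ℝ} (hs : 0 < s)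
    (x y : ℕ → Fin 2) :
    rhoVec ![r₁ ^ s, r₂ ^ s] x y = (rhoVec ![r₁, r₂] x y) ^ s := by
  unfold rhoVec
  split_ifs with h
  · simp [Real.zero_rpow hs.ne']
  · rw [← Real.finset_prod_rpow _ _ (fun i _ => by
        have : x i = 0 ∨ x i = 1 := by omega
        rcases this with h' | h' <;> simp [h', h1.le, h2.le])]
    refine Finset.prod_congr rfl fun i _ => ?_
    have : x i = 0 ∨ x i = 1 := by omega
    rcases this with h' | h' <;> simp [h']

/-- (Symbolic version of two-branch self-similar sets, strong separation.)
Let `r_1 ≥ r_2`, `t_1 ≥ t_2` be in `(0,1)` with `log r_1 / log r_2 ∉ ℚ`. Assuming the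
Rao–Ruan–Wang theorem (in the irrational case, Lipschitz equivalence holds iff the ratio
lists coincide), `E` and `F` are strictly Hölder equivalent if and only if
`log r_1 / log t_1 = log r_2 / log t_2`. -/
theorem two_branch_irrational (r₁ r₂ t₁ t₂ : ℝ)
    (hr₁ : 0 < r₁ ∧ r₁ < 1) (hr₂ : 0 < r₂ ∧ r₂ < 1)
    (ht₁ : 0 < t₁ ∧ t₁ < 1) (ht₂ : 0 < t₂ ∧ t₂ < 1)
    (hr : r₂ ≤ r₁) (ht : t₂ ≤ t₁)
    (hirr : ∀ q : ℚ, Real.log r₁ / Real.log r₂ ≠ q)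
    (hRRW : ∀ a b c e : ℝ, 0 < a → a < 1 → 0 < b → b < 1 → 0 < c → c < 1 → 0 < e → e < 1 →
      b ≤ a → e ≤ c → (∀ q : ℚ, Real.log a / Real.log b ≠ q) →
      (LipschitzEquivD (rhoVec ![a, b]) (rhoVec ![c, e]) ↔ (a = c ∧ b = e))) :
    HolderEquivD (rhoVec ![r₁, r₂]) (rhoVec ![t₁, t₂]) ↔
      Real.log r₁ / Real.log t₁ = Real.log r₂ / Real.log t₂ := by
  have hlr₁ : Real.log r₁ < 0 := Real.log_neg hr₁.1 hr₁.2
  have hlr₂ : Real.log r₂ < 0 := Real.log_neg hr₂.1 hr₂.2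
  have hlt₁ : Real.log t₁ < 0 := Real.log_neg ht₁.1 ht₁.2
  have hlt₂ : Real.log t₂ < 0 := Real.log_neg ht₂.1 ht₂.2
  constructor
  · rintro ⟨f, hf, s, C, hs, hC, hbd⟩
    have hlip : LipschitzEquivD (rhoVec ![r₁ ^ s, r₂ ^ s]) (rhoVec ![t₁, t₂]) :=
      ⟨f, hf, C, hC, fun a b => by
        rw [rhoVec_rpow hr₁.1 hr₂.1 hs]; exact hbd a b⟩
    have hirr' : ∀ q : ℚ, Real.log (r₁ ^ s) / Real.log (r₂ ^ s) ≠ q := by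
      intro q
      rw [Real.log_rpow hr₁.1, Real.log_rpow hr₂.1, mul_div_mul_left _ _ hs.ne']
      exact hirr q
    have key := (hRRW (r₁ ^ s) (r₂ ^ s) t₁ t₂
      (Real.rpow_pos_of_pos hr₁.1 s) (Real.rpow_lt_one hr₁.1.le hr₁.2 hs)
      (Real.rpow_pos_of_pos hr₂.1 s) (Real.rpow_lt_one hr₂.1.le hr₂.2 hs)
      ht₁.1 ht₁.2 ht₂.1 ht₂.2
      (Real.rpow_le_rpow hr₂.1.le hr hs.le) ht hirr').mp hlip
    obtain ⟨h1, h2⟩ := key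
    have e1 : Real.log t₁ = s * Real.log r₁ := by rw [← h1, Real.log_rpow hr₁.1]
    have e2 : Real.log t₂ = s * Real.log r₂ := by rw [← h2, Real.log_rpow hr₂.1]
    rw [e1, e2]
    field_simp [hlr₁.ne, hlr₂.ne, hs.ne']
  · intro heq
    set s : ℝ := Real.log t₁ / Real.log r₁ with hsdef
    have hs : 0 < s := div_pos_of_neg_of_neg hlt₁ hlr₁
    have h1 : r₁ ^ s = t₁ := by
      rw [Real.rpow_def_of_pos hr₁.1, hsdef, mul_div_cancel₀ _ hlr₁.ne,
        Real.exp_log ht₁.1]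
    have hcross : Real.log r₁ * Real.log t₂ = Real.log r₂ * Real.log t₁ :=
      (div_eq_div_iff hlt₁.ne hlt₂.ne).mp heq
    have h2 : r₂ ^ s = t₂ := by
      rw [Real.rpow_def_of_pos hr₂.1]
      have : Real.log r₂ * s = Real.log t₂ := by
        rw [hsdef]; field_simp [hlr₁.ne]; linarith [hcross]
      rw [this, Real.exp_log ht₂.1]
    have hirr' : ∀ q : ℚ, Real.log (r₁ ^ s) / Real.log (r₂ ^ s) ≠ q := by
      intro q
      rw [Real.log_rpow hr₁.1, Real.log_rpow hr₂.1, mul_div_mul_left _ _ hs.ne']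
      exact hirr q
    have hlip := (hRRW (r₁ ^ s) (r₂ ^ s) t₁ t₂
      (Real.rpow_pos_of_pos hr₁.1 s) (Real.rpow_lt_one hr₁.1.le hr₁.2 hs)
      (Real.rpow_pos_of_pos hr₂.1 s) (Real.rpow_lt_one hr₂.1.le hr₂.2 hs)
      ht₁.1 ht₁.2 ht₂.1 ht₂.2
      (Real.rpow_le_rpow hr₂.1.le hr hs.le) ht hirr').mpr ⟨h1, h2⟩
    obtain ⟨f, hf, C, hC, hbd⟩ := hlip
    exact ⟨f, hf, s, C, hs, hC, fun a b => by
      rw [← rhoVec_rpow hr₁.1 hr₂.1 hs]; exact hbd a b⟩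
end
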